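/- Let H be a Hermitian matrix indexed by pairs (x,s), x ∈ {0,…,n−1} a site and s ∈ {A,B}, which is short range with parameters d > 0, K_d > 0. Then for every t ∈ ℝ and all sites x, y, the bound ‖(e^{itH})_{x,y}‖ ≤ e^{|t|·K_d − |x−y|/d} holds. -/

import Mathlib

set_option maxHeartbeats 1000000
set_option synthInstance.maxHeartbeats 1000000


open MeasureTheory
open scoped ComplexOrder

noncomputable section

namespace Chiral

/-- The ℓ²-operator norm of a square complex matrix. -/
def opNorm {n : Type*} [Fintype n] [DecidableEq n] (T : Matrix n n ℂ) : ℝ :=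
  ‖Matrix.toEuclideanCLM (𝕜 := ℂ) T‖

/-- The square root of a positive semidefinite matrix, as `Matrix.PosSemidef.sqrt`
was defined in Mathlib of December 2024 (since removed). -/
def posSemidefSqrt {n : Type*} [Fintype n] [DecidableEq n] {A : Matrix n n ℂ}
    (hA : A.PosSemidef) : Matrix n n ℂ :=
  (hA.1.eigenvectorUnitary : Matrix n n ℂ) *
    Matrix.diagonal ((↑) ∘ Real.sqrt ∘ hA.1.eigenvalues) *
    (star hA.1.eigenvectorUnitary : Matrix n n ℂ)

/-- The trace norm `Tr √(T*T)` of a square complex matrix. -/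
def traceNorm {n : Type*} [Fintype n] [DecidableEq n] (T : Matrix n n ℂ) : ℝ :=
  ((posSemidefSqrt (Matrix.posSemidef_conjTranspose_mul_self T)).trace).re

open Classical in
/-- Functional calculus of a Hermitian matrix: same eigenvectors, eigenvalue `E`
replaced by `f E`.  (Junk value `0` if the matrix is not Hermitian.) -/
def matFun {n : Type*} [Fintype n] [DecidableEq n] (f : ℝ → ℂ) (H : Matrix n n ℂ) :
    Matrix n n ℂ :=
  if hH : H.IsHermitian then
    (hH.eigenvectorUnitary : Matrix n n ℂ) *
      Matrix.diagonal (fun i => f (hH.eigenvalues i)) *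
      star (hH.eigenvectorUnitary : Matrix n n ℂ)
  else 0

/-- The matrix exponential. -/
def matExp {n : Type*} [Fintype n] [DecidableEq n] (M : Matrix n n ℂ) : Matrix n n ℂ :=
  NormedSpace.exp M

/-- `S = tanh (H/δ)` by functional calculus. -/
def tanhOf {n : Type*} [Fintype n] [DecidableEq n] (δ : ℝ) (H : Matrix n n ℂ) :
    Matrix n n ℂ :=
  matFun (fun E => (Real.tanh (E / δ) : ℂ)) H

/-- Index set of the finite chain of length `L` with two internal degrees of freedom. -/
abbrev Site (L : ℕ) := Fin L × Fin 2

/-- The `2×2` block of a matrix on the chain corresponding to sites `x, y`. -/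
def matBlock {L : ℕ} (T : Matrix (Site L) (Site L) ℂ) (x y : Fin L) :
    Matrix (Fin 2) (Fin 2) ℂ :=
  Matrix.of fun s s' => T (x, s) (y, s')

/-- A finite Hamiltonian is short range with parameters `d`, `K`. -/
def FinShortRange {L : ℕ} (H : Matrix (Site L) (Site L) ℂ) (d K : ℝ) : Prop :=
  ∀ x : Fin L, ∑ y : Fin L,
    opNorm (matBlock H x y) * Real.exp (|((x : ℕ) : ℝ) - ((y : ℕ) : ℝ)| / d) ≤ K

/-- The chiral operator `C` on the finite chain: `+1` on the `A` component,
`-1` on the `B` component. -/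
def chiralC (L : ℕ) : Matrix (Site L) (Site L) ℂ :=
  Matrix.diagonal fun p => if p.2 = 0 then 1 else -1

/-- The diagonal matrix `θ(X)` associated to a switch function `θ`. -/
def switchX {L : ℕ} (θ : Fin L → ℝ) : Matrix (Site L) (Site L) ℂ :=
  Matrix.diagonal fun p => (θ p.1 : ℂ)

/-- The standard switch function: `1` on the left half (`x < L/2`), `0` on the right half. -/
def midSwitch (L : ℕ) : Fin L → ℝ := fun x => if ((x : ℕ) : ℝ) < (L : ℝ) / 2 then 1 else 0

/-- The edge index `Tr (C θ(X) (1 - S²))`. -/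
def edgeIndex {L : ℕ} (θ : Fin L → ℝ) (S : Matrix (Site L) (Site L) ℂ) : ℂ :=
  Matrix.trace (chiralC L * switchX θ * (1 - S * S))

/-- The bulk index `½ Tr (C S [θ(X), S])`. -/
def bulkIndex {L : ℕ} (θ : Fin L → ℝ) (S : Matrix (Site L) (Site L) ℂ) : ℂ :=
  (1 / 2 : ℂ) * Matrix.trace (chiralC L * S * (switchX θ * S - S * switchX θ))

/-- The bulk Hilbert space `ℓ²(ℤ; ℂ²)`. -/
abbrev BulkSpace := lp (fun _ : ℤ => EuclideanSpace ℂ (Fin 2)) 2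

/-- Bounded operators on the bulk Hilbert space. -/
abbrev BulkOp := BulkSpace →L[ℂ] BulkSpace

/-- The canonical basis vector at site `x` with internal index `s`. -/
def bvec (x : ℤ) (s : Fin 2) : BulkSpace := lp.single 2 x (EuclideanSpace.single s 1)

/-- The `2×2` block `T_{x,y}` of a bulk operator. -/
def bulkBlock (T : BulkOp) (x y : ℤ) : Matrix (Fin 2) (Fin 2) ℂ :=
  Matrix.of fun s s' => (inner ℂ (bvec x s) (T (bvec y s')) : ℂ)

/-- A bulk Hamiltonian is short range with parameters `d`, `K`:
`sup_x ∑_y ‖T_{x,y}‖ e^{|x-y|/d} ≤ K`. -/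
def BulkShortRange (T : BulkOp) (d K : ℝ) : Prop :=
  ∀ x : ℤ,
    Summable (fun y : ℤ => opNorm (bulkBlock T x y) * Real.exp (|((x : ℝ)) - ((y : ℝ))| / d)) ∧
    ∑' y : ℤ, opNorm (bulkBlock T x y) * Real.exp (|((x : ℝ)) - ((y : ℝ))| / d) ≤ K

/-- The spectrum of `T` does not meet the open interval `(-Δ, Δ)`. -/
def HasGap (T : BulkOp) (Δ : ℝ) : Prop :=
  ∀ r : ℝ, |r| < Δ → (r : ℂ) ∉ spectrum ℂ T

/-- The on-site chiral matrix `diag(1, -1)`. -/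
def c2 : Matrix (Fin 2) (Fin 2) ℂ := Matrix.diagonal fun s => if s = 0 then 1 else -1

/-- A bulk operator is chiral: it anticommutes with the bulk chiral operator
(expressed blockwise, which is equivalent). -/
def ChiralBulk (T : BulkOp) : Prop :=
  ∀ x y : ℤ, c2 * bulkBlock T x y + bulkBlock T x y * c2 = 0

/-- The restriction `ι* T ι` of a bulk operator to the finite open chain of length `L`. -/
def restrict (L : ℕ) (T : BulkOp) : Matrix (Site L) (Site L) ℂ :=
  Matrix.of fun p q => bulkBlock T ((p.1 : ℕ) : ℤ) ((q.1 : ℕ) : ℤ) p.2 q.2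


section Aux
variable {m : Type*} [Fintype m] [DecidableEq m]

lemma opNorm_nonneg' (T : Matrix m m ℂ) : 0 ≤ opNorm T := norm_nonneg _

lemma opNorm_zero' : opNorm (0 : Matrix m m ℂ) = 0 := by
  simp [opNorm, map_zero]

lemma opNorm_one' [Nonempty m] : opNorm (1 : Matrix m m ℂ) = 1 := by
  rw [opNorm, map_one]
  exact norm_one

lemma opNorm_mul_le' (A B : Matrix m m ℂ) : opNorm (A * B) ≤ opNorm A * opNorm B := by
  rw [opNorm, map_mul]
  exact norm_mul_le _ _

lemma opNorm_smul' (c : ℂ) (T : Matrix m m ℂ) : opNorm (c • T) = ‖c‖ * opNorm T := by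
  rw [opNorm, _root_.map_smul, opNorm]
  exact norm_smul c (Matrix.toEuclideanCLM (𝕜 := ℂ) T)

lemma opNorm_sum_le' {ι : Type*} (s : Finset ι) (f : ι → Matrix m m ℂ) :
    opNorm (∑ i ∈ s, f i) ≤ ∑ i ∈ s, opNorm (f i) := by
  rw [opNorm, map_sum]
  exact norm_sum_le _ _

end Aux

lemma matBlock_one' {L : ℕ} (x y : Fin L) :
    matBlock (1 : Matrix (Site L) (Site L) ℂ) x y = if x = y then 1 else 0 := by
  ext s s'
  by_cases h : x = y <;>
    simp [matBlock, Matrix.one_apply, Prod.ext_iff, h]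

lemma matBlock_smul' {L : ℕ} (c : ℂ) (T : Matrix (Site L) (Site L) ℂ) (x y : Fin L) :
    matBlock (c • T) x y = c • matBlock T x y := by
  ext s s'; simp [matBlock]

lemma matBlock_mul' {L : ℕ} (A B : Matrix (Site L) (Site L) ℂ) (x y : Fin L) :
    matBlock (A * B) x y = ∑ z : Fin L, matBlock A x z * matBlock B z y := by
  ext s s'
  simp [matBlock, Matrix.mul_apply, Matrix.sum_apply, Fintype.sum_prod_type]

lemma row_bound {n : ℕ} (H : Matrix (Site n) (Site n) ℂ) {d Kd : ℝ} (hd : 0 < d)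
    (hKd : 0 ≤ Kd) (hsr : FinShortRange H d Kd) (k : ℕ) (x : Fin n) :
    ∑ y : Fin n, opNorm (matBlock (H ^ k) x y) *
      Real.exp (|((x : ℕ) : ℝ) - ((y : ℕ) : ℝ)| / d) ≤ Kd ^ k := by
  induction k generalizing x with
  | zero =>
      rw [pow_zero, pow_zero]
      rw [Finset.sum_eq_single x]
      · rw [matBlock_one', if_pos rfl, opNorm_one']
        simp
      · intro y _ hy
        rw [matBlock_one', if_neg (fun h => hy h.symm), opNorm_zero', zero_mul]
      · intro h
        exact absurd (Finset.mem_univ x) h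
  | succ k ih =>
      have hw : ∀ u v z : Fin n,
          Real.exp (|((u : ℕ) : ℝ) - ((v : ℕ) : ℝ)| / d) ≤
            Real.exp (|((u : ℕ) : ℝ) - ((z : ℕ) : ℝ)| / d) *
              Real.exp (|((z : ℕ) : ℝ) - ((v : ℕ) : ℝ)| / d) := by
        intro u v z
        rw [← Real.exp_add, ← add_div]
        apply Real.exp_le_exp.mpr
        apply div_le_div_of_nonneg_right _ hd.le
        exact abs_sub_le _ _ _
      calc ∑ y : Fin n, opNorm (matBlock (H ^ (k + 1)) x y) *
              Real.exp (|((x : ℕ) : ℝ) - ((y : ℕ) : ℝ)| / d)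
          ≤ ∑ y : Fin n, ∑ z : Fin n,
              (opNorm (matBlock (H ^ k) x z) * opNorm (matBlock H z y)) *
              (Real.exp (|((x : ℕ) : ℝ) - ((z : ℕ) : ℝ)| / d) *
                Real.exp (|((z : ℕ) : ℝ) - ((y : ℕ) : ℝ)| / d)) := by
            refine Finset.sum_le_sum fun y _ => ?_
            have h1 : opNorm (matBlock (H ^ (k + 1)) x y) ≤
                ∑ z : Fin n, opNorm (matBlock (H ^ k) x z) * opNorm (matBlock H z y) := by
              rw [pow_succ, matBlock_mul']
              exact (opNorm_sum_le' _ _).trans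
                (Finset.sum_le_sum fun z _ => opNorm_mul_le' _ _)
            calc opNorm (matBlock (H ^ (k + 1)) x y) *
                    Real.exp (|((x : ℕ) : ℝ) - ((y : ℕ) : ℝ)| / d)
                ≤ (∑ z : Fin n, opNorm (matBlock (H ^ k) x z) * opNorm (matBlock H z y)) *
                    Real.exp (|((x : ℕ) : ℝ) - ((y : ℕ) : ℝ)| / d) :=
                  mul_le_mul_of_nonneg_right h1 (Real.exp_nonneg _)
              _ = ∑ z : Fin n, (opNorm (matBlock (H ^ k) x z) * opNorm (matBlock H z y)) *
                    Real.exp (|((x : ℕ) : ℝ) - ((y : ℕ) : ℝ)| / d) := Finset.sum_mul _ _ _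
              _ ≤ _ := Finset.sum_le_sum fun z _ =>
                  mul_le_mul_of_nonneg_left (hw x y z)
                    (mul_nonneg (opNorm_nonneg' _) (opNorm_nonneg' _))
        _ = ∑ z : Fin n, (opNorm (matBlock (H ^ k) x z) *
              Real.exp (|((x : ℕ) : ℝ) - ((z : ℕ) : ℝ)| / d)) *
              (∑ y : Fin n, opNorm (matBlock H z y) *
                Real.exp (|((z : ℕ) : ℝ) - ((y : ℕ) : ℝ)| / d)) := by
            rw [Finset.sum_comm]
            refine Finset.sum_congr rfl fun z _ => ?_
            rw [Finset.mul_sum]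
            refine Finset.sum_congr rfl fun y _ => ?_
            ring
        _ ≤ ∑ z : Fin n, (opNorm (matBlock (H ^ k) x z) *
              Real.exp (|((x : ℕ) : ℝ) - ((z : ℕ) : ℝ)| / d)) * Kd :=
            Finset.sum_le_sum fun z _ => mul_le_mul_of_nonneg_left (hsr z)
              (mul_nonneg (opNorm_nonneg' _) (Real.exp_nonneg _))
        _ = (∑ z : Fin n, opNorm (matBlock (H ^ k) x z) *
              Real.exp (|((x : ℕ) : ℝ) - ((z : ℕ) : ℝ)| / d)) * Kd := (Finset.sum_mul _ _ _).symm
        _ ≤ Kd ^ k * Kd := mul_le_mul_of_nonneg_right (ih x) hKd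
        _ = Kd ^ (k + 1) := (pow_succ Kd k).symm

theorem stmt17 {n : ℕ} (H : Matrix (Site n) (Site n) ℂ) (hH : H.IsHermitian)
    (d Kd : ℝ) (hd : 0 < d) (hKd : 0 < Kd) (hsr : FinShortRange H d Kd)
    (t : ℝ) (x y : Fin n) :
    opNorm (matBlock (matExp ((Complex.I * (t : ℂ)) • H)) x y) ≤
      Real.exp (|t| * Kd - |((x : ℕ) : ℝ) - ((y : ℕ) : ℝ)| / d) := by
  classical
  have hKd0 : (0 : ℝ) ≤ Kd := hKd.le
  set q : ℝ := |((x : ℕ) : ℝ) - ((y : ℕ) : ℝ)| / d with hq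
  have hblock : ∀ k : ℕ, opNorm (matBlock (H ^ k) x y) ≤ Kd ^ k * Real.exp (-q) := by
    intro k
    have h1 : opNorm (matBlock (H ^ k) x y) * Real.exp q ≤ Kd ^ k := by
      refine le_trans ?_ (row_bound H hd hKd0 hsr k x)
      exact Finset.single_le_sum
        (f := fun z : Fin n => opNorm (matBlock (H ^ k) x z) *
          Real.exp (|((x : ℕ) : ℝ) - ((z : ℕ) : ℝ)| / d))
        (fun z _ => mul_nonneg (opNorm_nonneg' _) (Real.exp_nonneg _)) (Finset.mem_univ y)
    rw [Real.exp_neg, ← div_eq_mul_inv, le_div_iff₀ (Real.exp_pos q)]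
    exact h1
  set M : Matrix (Site n) (Site n) ℂ := (Complex.I * (t : ℂ)) • H with hM
  have hnormc : ‖Complex.I * (t : ℂ)‖ = |t| := by simp
  have hBk : ∀ k : ℕ, opNorm (matBlock (((k.factorial : ℂ))⁻¹ • M ^ k) x y) ≤
      (|t| * Kd) ^ k / (k.factorial : ℝ) * Real.exp (-q) := by
    intro k
    have hMk : M ^ k = ((Complex.I * (t : ℂ)) ^ k) • H ^ k := smul_pow _ _ _
    rw [hMk, smul_smul, matBlock_smul', opNorm_smul']
    have hcn : ‖((k.factorial : ℂ))⁻¹ * (Complex.I * (t : ℂ)) ^ k‖ =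
        |t| ^ k / (k.factorial : ℝ) := by
      rw [norm_mul, norm_inv, norm_pow, hnormc, Complex.norm_natCast]
      ring
    rw [hcn]
    calc |t| ^ k / (k.factorial : ℝ) * opNorm (matBlock (H ^ k) x y)
        ≤ |t| ^ k / (k.factorial : ℝ) * (Kd ^ k * Real.exp (-q)) :=
          mul_le_mul_of_nonneg_left (hblock k) (by positivity)
      _ = (|t| * Kd) ^ k / (k.factorial : ℝ) * Real.exp (-q) := by
          rw [mul_pow]; ring
  have hsumM : Summable (fun k : ℕ => ((k.factorial : ℂ))⁻¹ • M ^ k) := by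
    letI : NormedRing (Matrix (Site n) (Site n) ℂ) := Matrix.linftyOpNormedRing
    letI : NormedAlgebra ℂ (Matrix (Site n) (Site n) ℂ) := Matrix.linftyOpNormedAlgebra
    exact NormedSpace.expSeries_summable' (𝕂 := ℂ) M
  let bl : Matrix (Site n) (Site n) ℂ →ₗ[ℂ] Matrix (Fin 2) (Fin 2) ℂ :=
    { toFun := fun T => matBlock T x y
      map_add' := fun A B => by ext s s'; simp [matBlock]
      map_smul' := fun c A => by ext s s'; simp [matBlock] }
  let blc : Matrix (Site n) (Site n) ℂ →L[ℂ] Matrix (Fin 2) (Fin 2) ℂ :=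
    LinearMap.toContinuousLinearMap bl
  have hexp : matBlock (matExp M) x y =
      ∑' k : ℕ, matBlock (((k.factorial : ℂ))⁻¹ • M ^ k) x y := by
    rw [matExp, NormedSpace.exp_eq_tsum (𝕂 := ℂ)]
    exact blc.map_tsum hsumM
  have hBsum : Summable (fun k : ℕ => matBlock (((k.factorial : ℂ))⁻¹ • M ^ k) x y) :=
    hsumM.map blc blc.continuous
  have hnormsum : Summable (fun k : ℕ => (|t| * Kd) ^ k / (k.factorial : ℝ) * Real.exp (-q)) :=
    (Real.summable_pow_div_factorial (|t| * Kd)).mul_right _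
  have hBnorm_sum : Summable (fun k : ℕ =>
      opNorm (matBlock (((k.factorial : ℂ))⁻¹ • M ^ k) x y)) :=
    Summable.of_nonneg_of_le (fun k => opNorm_nonneg' _) (fun k => hBk k) hnormsum
  let e2 : Matrix (Fin 2) (Fin 2) ℂ →ₗ[ℂ]
      (EuclideanSpace ℂ (Fin 2) →L[ℂ] EuclideanSpace ℂ (Fin 2)) :=
    { toFun := fun T => Matrix.toEuclideanCLM (𝕜 := ℂ) T
      map_add' := fun A B => map_add _ _ _
      map_smul' := fun c A => _root_.map_smul _ _ _ }
  let e2c := LinearMap.toContinuousLinearMap e2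
  have key : opNorm (matBlock (matExp M) x y) ≤
      ∑' k : ℕ, opNorm (matBlock (((k.factorial : ℂ))⁻¹ • M ^ k) x y) := by
    rw [hexp]
    have h1 : Matrix.toEuclideanCLM (𝕜 := ℂ)
        (∑' k : ℕ, matBlock (((k.factorial : ℂ))⁻¹ • M ^ k) x y) =
        ∑' k : ℕ, Matrix.toEuclideanCLM (𝕜 := ℂ)
          (matBlock (((k.factorial : ℂ))⁻¹ • M ^ k) x y) := e2c.map_tsum hBsum
    simp only [opNorm] at hBnorm_sum ⊢
    rw [h1]
    exact norm_tsum_le_tsum_norm hBnorm_sum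
  have hts : ∑' k : ℕ, (|t| * Kd) ^ k / (k.factorial : ℝ) * Real.exp (-q) =
      Real.exp (|t| * Kd) * Real.exp (-q) := by
    rw [tsum_mul_right]
    congr 1
    rw [Real.exp_eq_exp_ℝ, NormedSpace.exp_eq_tsum_div]
  have hfin : opNorm (matBlock (matExp M) x y) ≤ Real.exp (|t| * Kd) * Real.exp (-q) := by
    refine key.trans ?_
    rw [← hts]
    exact Summable.tsum_le_tsum hBk hBnorm_sum hnormsum
  calc opNorm (matBlock (matExp M) x y) ≤ Real.exp (|t| * Kd) * Real.exp (-q) := hfin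
    _ = Real.exp (|t| * Kd - q) := by rw [← Real.exp_add, sub_eq_add_neg]


end Chiral

end
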